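/- arXiv:1703.03262 — 8 statements merged into one kernel-verified Lean document; each statement's English description precedes it below -/
import Mathlib

section
/- Let G = ({u0,u1},{A0,A1}) be a finite two-player game and let G' = ({u0−u1, u1−u0},{A0,A1}) be the zero-sum game with the same action sets in which player 0's utility is u0−u1 and player 1's utility is u1−u0. A mixed strategy profile x is a Nash equilibrium of G' if and only if x is envy-proof in G. -/
open Finset

variable {α β : Type*}

/-- Expected utility of `u` under the product of mixed strategies `p` and `q`. -/
def EU [Fintype α] [Fintype β] (u : α → β → ℝ) (p : α → ℝ) (q : β → ℝ) : ℝ :=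
  ∑ a, ∑ b, p a * q b * u a b

/-- `p` is a probability distribution (mixed strategy). -/
def IsMixed [Fintype α] (p : α → ℝ) : Prop :=
  (∀ a, 0 ≤ p a) ∧ ∑ a, p a = 1

/-- The pure action `a` viewed as a mixed strategy. -/
def pureStrat [DecidableEq α] (a : α) : α → ℝ :=
  fun a' => if a' = a then 1 else 0

/-- `(p,q)` is a Nash equilibrium of the two-player game `({u0,u1},{α,β})`. -/
def IsNash [Fintype α] [Fintype β] [DecidableEq α] [DecidableEq β]
    (u0 u1 : α → β → ℝ) (p : α → ℝ) (q : β → ℝ) : Prop :=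
  (∀ a' : α, EU u0 (pureStrat a') q ≤ EU u0 p q) ∧
  (∀ b' : β, EU u1 p (pureStrat b') ≤ EU u1 p q)

/-- `(p,q)` is immune in the two-player game `({u0,u1},{α,β})`. -/
def IsImmune [Fintype α] [Fintype β] [DecidableEq α] [DecidableEq β]
    (u0 u1 : α → β → ℝ) (p : α → ℝ) (q : β → ℝ) : Prop :=
  (∀ a' : α, EU u1 (pureStrat a') q ≥ EU u1 p q) ∧
  (∀ b' : β, EU u0 p (pureStrat b') ≥ EU u0 p q)

/-- `(p,q)` is envy-proof in the two-player game `({u0,u1},{α,β})`. -/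
def IsEnvyProof [Fintype α] [Fintype β] [DecidableEq α] [DecidableEq β]
    (u0 u1 : α → β → ℝ) (p : α → ℝ) (q : β → ℝ) : Prop :=
  (∀ a' : α, EU u0 (pureStrat a') q - EU u0 p q ≤ EU u1 (pureStrat a') q - EU u1 p q) ∧
  (∀ b' : β, EU u1 p (pureStrat b') - EU u1 p q ≤ EU u0 p (pureStrat b') - EU u0 p q)


lemma EU_sub [Fintype α] [Fintype β] (u0 u1 : α → β → ℝ) (p : α → ℝ) (q : β → ℝ) :
    EU (fun a b => u0 a b - u1 a b) p q = EU u0 p q - EU u1 p q := by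
  simp [EU, mul_sub, Finset.sum_sub_distrib]

/-- `x` is a Nash equilibrium of the zero-sum game
`G' = ({u0−u1, u1−u0},{A0,A1})` iff `x` is envy-proof in `G = ({u0,u1},{A0,A1})`. -/
theorem nash_of_diff_iff_envyProof
    [Fintype α] [Fintype β] [DecidableEq α] [DecidableEq β]
    [Nonempty α] [Nonempty β]
    (u0 u1 : α → β → ℝ) (p : α → ℝ) (q : β → ℝ)
    (hp : IsMixed p) (hq : IsMixed q) :
    IsNash (fun a b => u0 a b - u1 a b) (fun a b => u1 a b - u0 a b) p q ↔
      IsEnvyProof u0 u1 p q := by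
  constructor
  · rintro ⟨h1, h2⟩
    constructor
    · intro a'
      have := h1 a'
      rw [EU_sub, EU_sub] at this
      linarith
    · intro b'
      have := h2 b'
      rw [EU_sub (fun a b => u1 a b) u0, EU_sub (fun a b => u1 a b) u0] at this
      linarith
  · rintro ⟨h1, h2⟩
    constructor
    · intro a'
      rw [EU_sub, EU_sub]
      have := h1 a'
      linarith
    · intro b'
      rw [EU_sub (fun a b => u1 a b) u0, EU_sub (fun a b => u1 a b) u0]
      have := h2 b'
      linarith
end

section
/- Every finite two-player game G = ({u0,u1},{A0,A1}) admits at least one mixed strategy profile that is envy-proof. -/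
open Finset

variable {α β : Type*}

/-- Theorem of the alternative for matrix games, via hyperplane separation. -/
lemma matrix_alternative [Fintype α] [Fintype β] [DecidableEq α] [Nonempty β]
    (A : α → β → ℝ) :
    (∃ q ∈ stdSimplex ℝ β, ∀ a, ∑ b, A a b * q b ≤ 0) ∨
    (∃ p ∈ stdSimplex ℝ α, ∀ b, 0 < ∑ a, p a * A a b) := by
  classical
  set φ : (β → ℝ) → (α → ℝ) := fun q a => ∑ b, A a b * q b with hφ
  by_cases h : ∃ q ∈ stdSimplex ℝ β, ∀ a, ∑ b, A a b * q b ≤ 0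
  · exact Or.inl h
  right
  push_neg at h
  set N : Set (α → ℝ) := ⋂ a, {x : α → ℝ | x a ≤ 0} with hN
  set C : Set (α → ℝ) := φ '' stdSimplex ℝ β with hC
  have hlin : IsLinearMap ℝ φ := by
    constructor
    · intro x y; funext a
      simp [φ, mul_add, Finset.sum_add_distrib]
    · intro c x; funext a
      simp only [φ, Pi.smul_apply, smul_eq_mul, Finset.mul_sum]
      exact Finset.sum_congr rfl fun b _ => by ring
  have hCconv : Convex ℝ C := (convex_stdSimplex ℝ β).is_linear_image hlin
  have hφcont : Continuous φ :=
    continuous_pi fun a => continuous_finset_sum _ fun b _ =>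
      continuous_const.mul (continuous_apply b)
  have hCcomp : IsCompact C := (isCompact_stdSimplex ℝ β).image hφcont
  have hNconv : Convex ℝ N := by
    intro x hx y hy s t hs ht hst
    simp only [hN, Set.mem_iInter, Set.mem_setOf_eq] at hx hy ⊢
    intro a
    have : s * x a + t * y a ≤ 0 :=
      add_nonpos (mul_nonpos_of_nonneg_of_nonpos hs (hx a))
        (mul_nonpos_of_nonneg_of_nonpos ht (hy a))
    simpa using this
  have hNclosed : IsClosed N :=
    isClosed_iInter fun a => isClosed_le (continuous_apply a) continuous_const
  have hdisj : Disjoint N C := by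
    rw [Set.disjoint_left]
    rintro x hxN ⟨q, hq, rfl⟩
    simp only [hN, Set.mem_iInter, Set.mem_setOf_eq] at hxN
    obtain ⟨a, ha⟩ := h q hq
    exact absurd (hxN a) (not_le.2 ha)
  obtain ⟨f, u, v, hfN, huv, hfC⟩ :=
    geometric_hahn_banach_closed_compact hNconv hNclosed hCconv hCcomp hdisj
  have h0N : (0 : α → ℝ) ∈ N := by
    simp [hN, Set.mem_iInter]
  have hu0 : 0 < u := by simpa using hfN 0 h0N
  set e : α → (α → ℝ) := fun a => fun j => if a = j then (1 : ℝ) else 0 with he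
  set p₀ : α → ℝ := fun a => f (e a) with hp₀
  have hp₀nonneg : ∀ a, 0 ≤ p₀ a := by
    intro a
    by_contra hneg
    push_neg at hneg
    set t : ℝ := (|u| + 1) / p₀ a with ht
    have htneg : t ≤ 0 := le_of_lt (div_neg_of_pos_of_neg (by positivity) hneg)
    have hmem : t • e a ∈ N := by
      simp only [hN, Set.mem_iInter, Set.mem_setOf_eq]
      intro j
      by_cases hj : a = j <;> simp [he, hj, htneg]
    have := hfN _ hmem
    rw [map_smul] at this
    have hval : t * p₀ a = |u| + 1 := div_mul_cancel₀ _ (ne_of_lt hneg)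
    rw [smul_eq_mul, hval] at this
    have : u ≤ |u| := le_abs_self u
    linarith
  have hkey : ∀ x : α → ℝ, f x = ∑ a, x a * p₀ a := by
    intro x
    conv_lhs => rw [pi_eq_sum_univ x]
    rw [map_sum]
    exact Finset.sum_congr rfl fun a _ => by rw [map_smul, smul_eq_mul]
  have hcol : ∀ b, 0 < ∑ a, A a b * p₀ a := by
    intro b
    have hmem : (fun a => A a b) ∈ C := by
      refine ⟨Pi.single b 1, single_mem_stdSimplex ℝ b, ?_⟩
      funext a
      simp [φ, Pi.single_apply, mul_ite]
    have := hfC _ hmem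
    rw [hkey] at this
    linarith
  set S : ℝ := ∑ a, p₀ a with hS
  have hSpos : 0 < S := by
    rcases lt_or_eq_of_le (Finset.sum_nonneg fun a _ => hp₀nonneg a) with h' | h'
    · exact h'
    · exfalso
      obtain ⟨b⟩ := ‹Nonempty β›
      have hz : ∀ a ∈ Finset.univ, p₀ a = 0 :=
        (Finset.sum_eq_zero_iff_of_nonneg fun a _ => hp₀nonneg a).1 h'.symm
      have : ∑ a, A a b * p₀ a = 0 :=
        Finset.sum_eq_zero fun a ha => by rw [hz a ha, mul_zero]
      linarith [hcol b]
  refine ⟨fun a => p₀ a / S, ⟨fun a => div_nonneg (hp₀nonneg a) hSpos.le, ?_⟩, ?_⟩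
  · rw [← Finset.sum_div, ← hS, div_self hSpos.ne']
  · intro b
    have : ∑ a, p₀ a / S * A a b = (∑ a, A a b * p₀ a) / S := by
      rw [Finset.sum_div]
      exact Finset.sum_congr rfl fun a _ => by ring
    rw [this]
    exact div_pos (hcol b) hSpos

/-- von Neumann minimax: existence of a saddle point value. -/
lemma exists_minimax [Fintype α] [Fintype β] [DecidableEq α] [DecidableEq β]
    [Nonempty α] [Nonempty β] (A : α → β → ℝ) :
    ∃ c : ℝ, ∃ p ∈ stdSimplex ℝ α, ∃ q ∈ stdSimplex ℝ β,
      (∀ a, ∑ b, A a b * q b ≤ c) ∧ (∀ b, c ≤ ∑ a, p a * A a b) := by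
  classical
  set F : (β → ℝ) → ℝ :=
    fun q => Finset.univ.sup' Finset.univ_nonempty (fun a => ∑ b, A a b * q b) with hF
  have hFcont : ContinuousOn F (stdSimplex ℝ β) :=
    ContinuousOn.finset_sup'_apply Finset.univ_nonempty fun a _ =>
      (continuous_finset_sum _ fun b _ =>
        continuous_const.mul (continuous_apply b)).continuousOn
  obtain ⟨b₀⟩ := ‹Nonempty β›
  have hsne : (stdSimplex ℝ β).Nonempty := ⟨Pi.single b₀ 1, single_mem_stdSimplex ℝ b₀⟩
  obtain ⟨q₀, hq₀, hqmin⟩ := (isCompact_stdSimplex ℝ β).exists_isMinOn hsne hFcont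
  set c : ℝ := F q₀ with hc
  have hqle : ∀ a, ∑ b, A a b * q₀ b ≤ c := fun a =>
    Finset.le_sup' (fun a => ∑ b, A a b * q₀ b) (Finset.mem_univ a)
  -- For each ε > 0 there is a mixed p with pᵀA ≥ c - ε everywhere
  have hstep : ∀ ε : ℝ, 0 < ε →
      ∃ p ∈ stdSimplex ℝ α, ∀ b, c - ε ≤ ∑ a, p a * A a b := by
    intro ε hε
    rcases matrix_alternative (fun a b => A a b - (c - ε)) with ⟨q, hq, hq2⟩ | ⟨p, hp, hp2⟩
    · exfalso
      have hce : ∀ a, ∑ b, A a b * q b ≤ c - ε := by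
        intro a
        have h1 : ∑ b, (A a b - (c - ε)) * q b
            = ∑ b, A a b * q b - (c - ε) := by
          simp only [sub_mul, Finset.sum_sub_distrib, ← Finset.mul_sum, hq.2, mul_one]
        have := hq2 a
        rw [h1] at this
        linarith
      have hFq : F q ≤ c - ε := Finset.sup'_le _ _ fun a _ => hce a
      have := hqmin hq
      simp only [hc] at this
      have : c ≤ F q := this
      linarith
    · refine ⟨p, hp, fun b => ?_⟩
      have h1 : ∑ a, p a * (A a b - (c - ε)) = ∑ a, p a * A a b - (c - ε) := by
        simp only [mul_sub, Finset.sum_sub_distrib, ← Finset.sum_mul, hp.2, one_mul]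
      have := hp2 b
      rw [h1] at this
      linarith
  -- compactness: pass to the limit ε → 0
  set K : ℕ → Set (α → ℝ) := fun n =>
    stdSimplex ℝ α ∩ ⋂ b, {p : α → ℝ | c - 1 / (n + 1) ≤ ∑ a, p a * A a b} with hK
  have hKcl : ∀ n, IsClosed (K n) :=
    fun n => ((isCompact_stdSimplex ℝ α).isClosed).inter
      (isClosed_iInter fun b => isClosed_le continuous_const
        (continuous_finset_sum _ fun a _ => (continuous_apply a).mul continuous_const))
  have hKcpt : ∀ n, IsCompact (K n) := fun n =>
    (isCompact_stdSimplex ℝ α).inter_right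
      (isClosed_iInter fun b => isClosed_le continuous_const
        (continuous_finset_sum _ fun a _ => (continuous_apply a).mul continuous_const))
  have hKne : ∀ n, (K n).Nonempty := by
    intro n
    obtain ⟨p, hp, hp2⟩ := hstep (1 / (n + 1)) (by positivity)
    exact ⟨p, hp, Set.mem_iInter.2 fun b => hp2 b⟩
  have hKmono : ∀ m n : ℕ, m ≤ n → K n ⊆ K m := by
    intro m n hmn x hx
    refine ⟨hx.1, Set.mem_iInter.2 fun b => ?_⟩
    have hx2 := Set.mem_iInter.1 hx.2 b
    simp only [Set.mem_setOf_eq] at hx2 ⊢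
    have hmn' : (m : ℝ) ≤ n := Nat.cast_le.mpr hmn
    have : (1 : ℝ) / (n + 1) ≤ 1 / (m + 1) :=
      one_div_le_one_div_of_le (by positivity) (by linarith)
    linarith
  have hdir : Directed (· ⊇ ·) K := fun m n =>
    ⟨max m n, hKmono m _ (le_max_left m n), hKmono n _ (le_max_right m n)⟩
  obtain ⟨p, hp⟩ :=
    IsCompact.nonempty_iInter_of_directed_nonempty_isCompact_isClosed K hdir hKne hKcpt hKcl
  have hpmem : p ∈ stdSimplex ℝ α := (Set.mem_iInter.1 hp 0).1
  refine ⟨c, p, hpmem, q₀, hq₀, hqle, fun b => ?_⟩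
  by_contra hlt
  push_neg at hlt
  obtain ⟨n, hn⟩ := exists_nat_one_div_lt (show 0 < c - ∑ a, p a * A a b by linarith)
  have := Set.mem_iInter.1 (Set.mem_iInter.1 hp n).2 b
  simp only [Set.mem_setOf_eq] at this
  linarith

lemma EU_pure_left [Fintype α] [Fintype β] [DecidableEq α]
    (u : α → β → ℝ) (a' : α) (q : β → ℝ) :
    EU u (pureStrat a') q = ∑ b, u a' b * q b := by
  rw [EU, Finset.sum_comm]
  simp [pureStrat, ite_mul, Finset.sum_ite_eq', mul_comm]

lemma EU_pure_right [Fintype α] [Fintype β] [DecidableEq β]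
    (u : α → β → ℝ) (p : α → ℝ) (b' : β) :
    EU u p (pureStrat b') = ∑ a, p a * u a b' := by
  rw [EU]
  simp [pureStrat, mul_ite, ite_mul, Finset.sum_ite_eq']

/-- every finite two-player game admits an envy-proof mixed strategy profile. -/
theorem exists_envyProof_profile
    [Fintype α] [Fintype β] [DecidableEq α] [DecidableEq β]
    [Nonempty α] [Nonempty β]
    (u0 u1 : α → β → ℝ) :
    ∃ (p : α → ℝ) (q : β → ℝ), IsMixed p ∧ IsMixed q ∧ IsEnvyProof u0 u1 p q := by
  classical
  set v : α → β → ℝ := fun a b => u0 a b - u1 a b with hv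
  obtain ⟨c, p, hp, q, hq, hqa, hpb⟩ := exists_minimax v
  have hple : EU v p q ≤ c := by
    have h1 : EU v p q = ∑ a, p a * ∑ b, v a b * q b := by
      rw [EU]
      exact Finset.sum_congr rfl fun a _ => by
        rw [Finset.mul_sum]; exact Finset.sum_congr rfl fun b _ => by ring
    rw [h1]
    calc ∑ a, p a * ∑ b, v a b * q b ≤ ∑ a, p a * c :=
          Finset.sum_le_sum fun a _ => mul_le_mul_of_nonneg_left (hqa a) (hp.1 a)
      _ = c := by rw [← Finset.sum_mul, hp.2, one_mul]
  have hpge : c ≤ EU v p q := by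
    have h1 : EU v p q = ∑ b, q b * ∑ a, p a * v a b := by
      rw [EU, Finset.sum_comm]
      exact Finset.sum_congr rfl fun b _ => by
        rw [Finset.mul_sum]; exact Finset.sum_congr rfl fun a _ => by ring
    rw [h1]
    calc c = ∑ b, q b * c := by rw [← Finset.sum_mul, hq.2, one_mul]
      _ ≤ ∑ b, q b * ∑ a, p a * v a b :=
          Finset.sum_le_sum fun b _ => mul_le_mul_of_nonneg_left (hpb b) (hq.1 b)
  refine ⟨p, q, ⟨hp.1, hp.2⟩, ⟨hq.1, hq.2⟩, ?_, ?_⟩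
  · intro a'
    have h1 : EU v (pureStrat a') q ≤ c := by
      rw [EU_pure_left]
      exact hqa a'
    have := h1.trans hpge
    rw [hv] at this
    rw [EU_sub, EU_sub] at this
    linarith
  · intro b'
    have h1 : c ≤ EU v p (pureStrat b') := by
      rw [EU_pure_right]
      exact hpb b'
    have := hple.trans h1
    rw [hv] at this
    rw [EU_sub, EU_sub] at this
    linarith
end

section
/- Consider the two-player game G* with action sets A0 = A1 = {M, S} and utilities u0(M,M) = u1(M,M) = 4, u0(M,S) = 1, u1(M,S) = 3, u0(S,M) = 3, u1(S,M) = 1, u0(S,S) = u1(S,S) = 0. Then the pure profile (M,M) is a Nash equilibrium of G*, but no mixed strategy profile of G* is both a Nash equilibrium and envy-proof. In particular, there exists a finite two-player game that admits no envy-proof Nash equilibrium. -/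
open Finset

variable {α β : Type*}

/-- Player 0's utility in the coordination game `G*` (`true` = movie `M`, `false` = shopping `S`). -/
def gStar0 : Bool → Bool → ℝ
  | true, true => 4
  | true, false => 1
  | false, true => 3
  | false, false => 0

/-- Player 1's utility in the coordination game `G*`. -/
def gStar1 : Bool → Bool → ℝ
  | true, true => 4
  | true, false => 3
  | false, true => 1
  | false, false => 0

/-- in `G*`, the pure profile (M,M) is a Nash equilibrium, but no mixed
strategy profile is both a Nash equilibrium and envy-proof; in particular, some finite
two-player game admits no envy-proof Nash equilibrium. -/
theorem gStar_no_envyProof_nash :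
    IsNash gStar0 gStar1 (pureStrat true) (pureStrat true) ∧
    (¬ ∃ (p q : Bool → ℝ), IsMixed p ∧ IsMixed q ∧
        IsNash gStar0 gStar1 p q ∧ IsEnvyProof gStar0 gStar1 p q) ∧
    (∃ (u0 u1 : Bool → Bool → ℝ), ¬ ∃ (p q : Bool → ℝ), IsMixed p ∧ IsMixed q ∧
        IsNash u0 u1 p q ∧ IsEnvyProof u0 u1 p q) := by
  have key : ¬ ∃ (p q : Bool → ℝ), IsMixed p ∧ IsMixed q ∧
      IsNash gStar0 gStar1 p q ∧ IsEnvyProof gStar0 gStar1 p q := by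
    rintro ⟨p, q, ⟨hp0, hp1⟩, ⟨hq0, hq1⟩, ⟨hN0, hN1⟩, ⟨hE0, hE1⟩⟩
    have hpt := hp0 true
    have hqt := hq0 true
    have hpf := hp0 false
    have hqf := hq0 false
    have h1 := hE0 false
    have h2 := hE1 false
    have h3 := hN0 true
    simp only [EU, pureStrat, Fintype.sum_bool, gStar0, gStar1,
      if_true, if_false, reduceIte] at h1 h2 h3 hp1 hq1
    norm_num at h1 h2 h3
    have hsum : p true + q true ≤ 0 := by nlinarith
    have hpt0 : p true = 0 := by linarith
    have hqt0 : q true = 0 := by linarith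
    have hpf1 : p false = 1 := by linarith
    have hqf1 : q false = 1 := by linarith
    rw [hpt0, hqt0, hpf1, hqf1] at h3
    norm_num at h3
  refine ⟨?_, key, gStar0, gStar1, key⟩
  constructor <;> intro a <;> cases a <;>
    simp [EU, pureStrat, Fintype.sum_bool, gStar0, gStar1] <;> norm_num
end

section
/- Consider the two-player game G* with action sets A0 = A1 = {M, S} and utilities u0(M,M) = u1(M,M) = 4, u0(M,S) = 1, u1(M,S) = 3, u0(S,M) = 3, u1(S,M) = 1, u0(S,S) = u1(S,S) = 0. Then no mixed strategy profile of G* is both a Nash equilibrium and immune. In particular, there exists a finite two-player game that admits no immune Nash equilibrium. -/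
open Finset

variable {α β : Type*}

lemma gStar_key :
    ¬ ∃ (p q : Bool → ℝ), IsMixed p ∧ IsMixed q ∧
        IsNash gStar0 gStar1 p q ∧ IsImmune gStar0 gStar1 p q := by
  rintro ⟨p, q, ⟨hp0, hp1⟩, ⟨hq0, hq1⟩, ⟨hN0, hN1⟩, ⟨hI0, hI1⟩⟩
  have hN := hN0 true
  have hM := hN1 true
  have hI := hI0 false
  simp [EU, pureStrat, gStar0, gStar1, Fintype.sum_bool] at hN hM hI hp1 hq1 --

  nlinarith [hp0 true, hp0 false, hq0 true, hq0 false, hp1, hq1, hN, hM, hI]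

/-- in `G*`, no mixed strategy profile is both a Nash equilibrium and immune;
in particular, some finite two-player game admits no immune Nash equilibrium. -/
theorem gStar_no_immune_nash :
    (¬ ∃ (p q : Bool → ℝ), IsMixed p ∧ IsMixed q ∧
        IsNash gStar0 gStar1 p q ∧ IsImmune gStar0 gStar1 p q) ∧
    (∃ (u0 u1 : Bool → Bool → ℝ), ¬ ∃ (p q : Bool → ℝ), IsMixed p ∧ IsMixed q ∧
        IsNash u0 u1 p q ∧ IsImmune u0 u1 p q) := by
  exact ⟨gStar_key, gStar0, gStar1, gStar_key⟩
end

section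
/- Let G = ({u0,u1},{A0,A1}) be a finite two-player game. A mixed strategy profile x is both a Nash equilibrium of G and immune in G if and only if, for each b ∈ {0,1}, x is a Nash equilibrium of the two-player zero-sum game G_b with the same action sets in which player b's utility is u_b and player b̄'s utility is −u_b. Equivalently, x is an immune Nash equilibrium of G if and only if for each b ∈ {0,1}, each pure action x'_b ∈ A_b and each pure action x'_{b̄} ∈ A_{b̄}: u_b(x_b : x'_{b̄}) ≥ u_b(x) ≥ u_b(x'_b : x_{b̄}). -/
open Finset

variable {α β : Type*}

/-- `x` is an immune Nash equilibrium of `G` iff for each `b ∈ {0,1}`,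
`x` is a Nash equilibrium of the zero-sum game `G_b = ({u_b, −u_b})`, and equivalently
iff `u_b(x_b : x'_b̄) ≥ u_b(x) ≥ u_b(x'_b : x_b̄)` for all pure deviations. -/
theorem immune_nash_iff_zeroSum_nash
    [Fintype α] [Fintype β] [DecidableEq α] [DecidableEq β]
    [Nonempty α] [Nonempty β]
    (u0 u1 : α → β → ℝ) (p : α → ℝ) (q : β → ℝ)
    (hp : IsMixed p) (hq : IsMixed q) :
    ((IsNash u0 u1 p q ∧ IsImmune u0 u1 p q) ↔
      (IsNash u0 (fun a b => -u0 a b) p q ∧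
       IsNash (fun a b => -u1 a b) u1 p q)) ∧
    ((IsNash u0 u1 p q ∧ IsImmune u0 u1 p q) ↔
      ((∀ (a' : α) (b' : β),
          EU u0 p (pureStrat b') ≥ EU u0 p q ∧ EU u0 p q ≥ EU u0 (pureStrat a') q) ∧
       (∀ (a' : α) (b' : β),
          EU u1 (pureStrat a') q ≥ EU u1 p q ∧ EU u1 p q ≥ EU u1 p (pureStrat b')))) := by
  have hneg : ∀ (u : α → β → ℝ) (p : α → ℝ) (q : β → ℝ),
      EU (fun a b => -u a b) p q = -EU u p q := by
    intro u p q
    simp [EU, mul_neg, Finset.sum_neg_distrib]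
  unfold IsNash IsImmune
  simp only [hneg, neg_le_neg_iff, ge_iff_le]
  obtain ⟨a0⟩ := ‹Nonempty α›
  obtain ⟨b0⟩ := ‹Nonempty β›
  constructor
  · tauto
  · constructor
    · rintro ⟨⟨h1, h2⟩, ⟨h3, h4⟩⟩
      exact ⟨fun a' b' => ⟨h4 b', h1 a'⟩, fun a' b' => ⟨h3 a', h2 b'⟩⟩
    · rintro ⟨h1, h2⟩
      exact ⟨⟨fun a' => (h1 a' b0).2, fun b' => (h2 a0 b').2⟩,
             ⟨fun a' => (h2 a' b0).1, fun b' => (h1 a0 b').1⟩⟩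
end

section
/- Let G = ({u0,u1},{A0,A1}) be a finite two-player game. Define v0 = max over probability distributions p on A0 of (min over a1 ∈ A1 of E_{a0∼p}[u0(a0,a1)]) and v1 = max over probability distributions q on A1 of (min over a0 ∈ A0 of E_{a1∼q}[u1(a0,a1)]). Then G admits a mixed strategy profile that is both a Nash equilibrium and immune if and only if there exist a distribution p on A0 and a distribution q on A1 such that: for every a1 ∈ A1, E_{a0∼p}[u0(a0,a1)] ≥ v0 and E_{a0∼p}[u1(a0,a1)] ≤ v1, and for every a0 ∈ A0, E_{a1∼q}[u1(a0,a1)] ≥ v1 and E_{a1∼q}[u0(a0,a1)] ≤ v0. Moreover, any such pair (p,q) is itself an immune Nash equilibrium of G. -/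
open Finset

variable {α β : Type*}

/-- Expected utility when player 0 plays the mixed strategy `p` and player 1 plays pure `b`. -/
def rowEU [Fintype α] (u : α → β → ℝ) (p : α → ℝ) (b : β) : ℝ :=
  ∑ a, p a * u a b

/-- Expected utility when player 1 plays the mixed strategy `q` and player 0 plays pure `a`. -/
def colEU [Fintype β] (u : α → β → ℝ) (q : β → ℝ) (a : α) : ℝ :=
  ∑ b, q b * u a b

lemma mixed_sum_le [Fintype α] {p f : α → ℝ} (hp : IsMixed p) {c : ℝ}
    (h : ∀ a, f a ≤ c) : ∑ a, p a * f a ≤ c := by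
  calc ∑ a, p a * f a ≤ ∑ a, p a * c :=
        Finset.sum_le_sum fun a _ => mul_le_mul_of_nonneg_left (h a) (hp.1 a)
    _ = c := by rw [← Finset.sum_mul, hp.2, one_mul]

lemma mixed_sum_ge [Fintype α] {p f : α → ℝ} (hp : IsMixed p) {c : ℝ}
    (h : ∀ a, c ≤ f a) : c ≤ ∑ a, p a * f a := by
  calc c = ∑ a, p a * c := by rw [← Finset.sum_mul, hp.2, one_mul]
    _ ≤ ∑ a, p a * f a :=
        Finset.sum_le_sum fun a _ => mul_le_mul_of_nonneg_left (h a) (hp.1 a)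

lemma isMixed_pure [Fintype α] [DecidableEq α] (a : α) : IsMixed (pureStrat a) := by
  constructor
  · intro a'; unfold pureStrat; split <;> norm_num
  · simp [pureStrat]

lemma EU_col [Fintype α] [Fintype β] (u : α → β → ℝ) (p : α → ℝ) (q : β → ℝ) :
    EU u p q = ∑ a, p a * colEU u q a := by
  simp [EU, colEU, Finset.mul_sum, mul_assoc]

lemma EU_row [Fintype α] [Fintype β] (u : α → β → ℝ) (p : α → ℝ) (q : β → ℝ) :
    EU u p q = ∑ b, q b * rowEU u p b := by
  rw [EU, Finset.sum_comm]
  simp only [rowEU, Finset.mul_sum]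
  exact Finset.sum_congr rfl fun b _ => Finset.sum_congr rfl fun a _ => by ring

lemma EU_pureL [Fintype α] [Fintype β] [DecidableEq α] (u : α → β → ℝ) (a' : α) (q : β → ℝ) :
    EU u (pureStrat a') q = colEU u q a' := by
  rw [EU_col]
  simp [pureStrat, ite_mul]

lemma EU_pureR [Fintype α] [Fintype β] [DecidableEq β] (u : α → β → ℝ) (p : α → ℝ) (b' : β) :
    EU u p (pureStrat b') = rowEU u p b' := by
  rw [EU_row]
  simp [pureStrat, ite_mul]

/-- with `v0 = max_p min_{a1} E_{a0∼p}[u0]` and `v1 = max_q min_{a0} E_{a1∼q}[u1]`,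
`G` admits an immune Nash equilibrium iff distributions `p`, `q` exist with
`E_{a0∼p}[u0(·,a1)] ≥ v0`, `E_{a0∼p}[u1(·,a1)] ≤ v1` for all `a1`, and
`E_{a1∼q}[u1(a0,·)] ≥ v1`, `E_{a1∼q}[u0(a0,·)] ≤ v0` for all `a0`;
moreover any such pair `(p,q)` is itself an immune Nash equilibrium. -/
theorem immune_nash_lp_characterization
    [Fintype α] [Fintype β] [DecidableEq α] [DecidableEq β]
    [Nonempty α] [Nonempty β]
    (u0 u1 : α → β → ℝ) (v0 v1 : ℝ)
    (hv0 : v0 = sSup {r : ℝ | ∃ p : α → ℝ, IsMixed p ∧ r = ⨅ b : β, rowEU u0 p b})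
    (hv1 : v1 = sSup {r : ℝ | ∃ q : β → ℝ, IsMixed q ∧ r = ⨅ a : α, colEU u1 q a}) :
    ((∃ (p : α → ℝ) (q : β → ℝ), IsMixed p ∧ IsMixed q ∧
        IsNash u0 u1 p q ∧ IsImmune u0 u1 p q) ↔
      (∃ (p : α → ℝ) (q : β → ℝ), IsMixed p ∧ IsMixed q ∧
        (∀ b : β, rowEU u0 p b ≥ v0 ∧ rowEU u1 p b ≤ v1) ∧
        (∀ a : α, colEU u1 q a ≥ v1 ∧ colEU u0 q a ≤ v0))) ∧
    (∀ (p : α → ℝ) (q : β → ℝ), IsMixed p → IsMixed q →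
      (∀ b : β, rowEU u0 p b ≥ v0 ∧ rowEU u1 p b ≤ v1) →
      (∀ a : α, colEU u1 q a ≥ v1 ∧ colEU u0 q a ≤ v0) →
      IsNash u0 u1 p q ∧ IsImmune u0 u1 p q) := by
  have main : ∀ (p : α → ℝ) (q : β → ℝ), IsMixed p → IsMixed q →
          (∀ b : β, rowEU u0 p b ≥ v0 ∧ rowEU u1 p b ≤ v1) →
          (∀ a : α, colEU u1 q a ≥ v1 ∧ colEU u0 q a ≤ v0) →
          IsNash u0 u1 p q ∧ IsImmune u0 u1 p q := by
        intro p q hp hq hB hA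
        have h0ge : v0 ≤ EU u0 p q := by
          rw [EU_row]; exact mixed_sum_ge hq fun b => (hB b).1
        have h0le : EU u0 p q ≤ v0 := by
          rw [EU_col]; exact mixed_sum_le hp fun a => (hA a).2
        have h1ge : v1 ≤ EU u1 p q := by
          rw [EU_col]; exact mixed_sum_ge hp fun a => (hA a).1
        have h1le : EU u1 p q ≤ v1 := by
          rw [EU_row]; exact mixed_sum_le hq fun b => (hB b).2
        refine ⟨⟨fun a' => ?_, fun b' => ?_⟩, fun a' => ?_, fun b' => ?_⟩
        · rw [EU_pureL]; exact le_trans (hA a').2 h0ge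
        · rw [EU_pureR]; exact le_trans (hB b').2 h1ge
        · rw [EU_pureL]; exact le_trans h1le (hA a').1
        · rw [EU_pureR]; exact le_trans h0le (hB b').1
  refine ⟨⟨?_, fun ⟨p, q, hp, hq, hB, hA⟩ => ⟨p, q, hp, hq, main p q hp hq hB hA⟩⟩, main⟩
  rintro ⟨p, q, hp, hq, hN, hI⟩
  -- boundedness / nonemptiness of the two value sets
  have hbdd0 : BddAbove {r : ℝ | ∃ p : α → ℝ, IsMixed p ∧ r = ⨅ b : β, rowEU u0 p b} := by
    refine ⟨Finset.univ.sup' Finset.univ_nonempty (fun ab : α × β => u0 ab.1 ab.2), ?_⟩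
    rintro r ⟨p', hp', rfl⟩
    calc (⨅ b : β, rowEU u0 p' b) ≤ rowEU u0 p' (Classical.arbitrary β) :=
          ciInf_le (Set.finite_range _).bddBelow _
      _ ≤ _ := mixed_sum_le hp' fun a =>
          Finset.le_sup' (fun ab : α × β => u0 ab.1 ab.2)
            (Finset.mem_univ (a, Classical.arbitrary β))
  have hbdd1 : BddAbove {r : ℝ | ∃ q : β → ℝ, IsMixed q ∧ r = ⨅ a : α, colEU u1 q a} := by
    refine ⟨Finset.univ.sup' Finset.univ_nonempty (fun ab : α × β => u1 ab.1 ab.2), ?_⟩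
    rintro r ⟨q', hq', rfl⟩
    calc (⨅ a : α, colEU u1 q' a) ≤ colEU u1 q' (Classical.arbitrary α) :=
          ciInf_le (Set.finite_range _).bddBelow _
      _ ≤ _ := mixed_sum_le hq' fun b =>
          Finset.le_sup' (fun ab : α × β => u1 ab.1 ab.2)
            (Finset.mem_univ (Classical.arbitrary α, b))
  have hne0 : Set.Nonempty {r : ℝ | ∃ p : α → ℝ, IsMixed p ∧ r = ⨅ b : β, rowEU u0 p b} :=
    ⟨_, pureStrat (Classical.arbitrary α), isMixed_pure _, rfl⟩
  have hne1 : Set.Nonempty {r : ℝ | ∃ q : β → ℝ, IsMixed q ∧ r = ⨅ a : α, colEU u1 q a} :=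
    ⟨_, pureStrat (Classical.arbitrary β), isMixed_pure _, rfl⟩
  -- EU u0 p q = v0
  have hEle0 : EU u0 p q ≤ v0 := by
    rw [hv0]
    refine le_trans (le_ciInf fun b => ?_) (le_csSup hbdd0 ⟨p, hp, rfl⟩)
    rw [← EU_pureR]; exact hI.2 b
  have hvle0 : v0 ≤ EU u0 p q := by
    rw [hv0]
    refine csSup_le hne0 ?_
    rintro r ⟨p', hp', rfl⟩
    calc (⨅ b : β, rowEU u0 p' b) ≤ ∑ b, q b * rowEU u0 p' b :=
          mixed_sum_ge hq fun b => ciInf_le (Set.finite_range _).bddBelow _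
      _ = EU u0 p' q := (EU_row _ _ _).symm
      _ = ∑ a, p' a * colEU u0 q a := EU_col _ _ _
      _ ≤ EU u0 p q := mixed_sum_le hp' fun a => by rw [← EU_pureL]; exact hN.1 a
  have hE0 : EU u0 p q = v0 := le_antisymm hEle0 hvle0
  -- EU u1 p q = v1
  have hEle1 : EU u1 p q ≤ v1 := by
    rw [hv1]
    refine le_trans (le_ciInf fun a => ?_) (le_csSup hbdd1 ⟨q, hq, rfl⟩)
    rw [← EU_pureL]; exact hI.1 a
  have hvle1 : v1 ≤ EU u1 p q := by
    rw [hv1]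
    refine csSup_le hne1 ?_
    rintro r ⟨q', hq', rfl⟩
    calc (⨅ a : α, colEU u1 q' a) ≤ ∑ a, p a * colEU u1 q' a :=
          mixed_sum_ge hp fun a => ciInf_le (Set.finite_range _).bddBelow _
      _ = EU u1 p q' := (EU_col _ _ _).symm
      _ = ∑ b, q' b * rowEU u1 p b := EU_row _ _ _
      _ ≤ EU u1 p q := mixed_sum_le hq' fun b => by rw [← EU_pureR]; exact hN.2 b
  have hE1 : EU u1 p q = v1 := le_antisymm hEle1 hvle1
  refine ⟨p, q, hp, hq, fun b => ⟨?_, ?_⟩, fun a => ⟨?_, ?_⟩⟩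
  · rw [← hE0, ← EU_pureR]; exact hI.2 b
  · rw [← hE1, ← EU_pureR]; exact hN.2 b
  · rw [← hE1, ← EU_pureL]; exact hI.1 a
  · rw [← hE0, ← EU_pureL]; exact hN.1 a
end

section
/- Let G = ({u_i}_{i∈[m]}, A) be an m-player game that is γ-varied for some γ ≥ 0, and let t ∈ ℕ. Then every mixed strategy profile that is a Nash equilibrium of G is (γt, t)-coalitional envy-proof. -/
open Finset

variable {m : ℕ} {A : Type*}

/-- `x` is a mixed strategy profile: each player's strategy is a probability distribution. -/
def IsMixedProfile [Fintype A] (x : Fin m → A → ℝ) : Prop :=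
  ∀ i, (∀ a, 0 ≤ x i a) ∧ ∑ a, x i a = 1

/-- Expected utility of `u` under the product distribution of the mixed profile `x`. -/
def pEU [Fintype A] (u : (Fin m → A) → ℝ) (x : Fin m → A → ℝ) : ℝ :=
  ∑ s : Fin m → A, (∏ i, x i (s i)) * u s

/-- The pure action `a` viewed as a mixed strategy. -/
def pureS [DecidableEq A] (a : A) : A → ℝ := fun b => if b = a then 1 else 0

/-- The profile `(x_{−S} : x'_S)`: players in `S` deviate to the pure actions given by
`d`, the others keep playing as in `x`. -/
def deviate [DecidableEq A] (x : Fin m → A → ℝ) (S : Finset (Fin m)) (d : Fin m → A) :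
    Fin m → A → ℝ :=
  fun i => if i ∈ S then pureS (d i) else x i

/-- `x` is a Nash equilibrium of the `m`-player game `({u_i}, A)`. -/
def IsNashM [Fintype A] [DecidableEq A] (u : Fin m → (Fin m → A) → ℝ)
    (x : Fin m → A → ℝ) : Prop :=
  ∀ (i : Fin m) (a : A), pEU (u i) (deviate x {i} (fun _ => a)) ≤ pEU (u i) x

/-- `x` is `(ε,t)`-coalitional envy-proof. -/
def CoalEnvyProof [Fintype A] [DecidableEq A] (u : Fin m → (Fin m → A) → ℝ)
    (ε : ℝ) (t : ℕ) (x : Fin m → A → ℝ) : Prop :=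
  ∀ S : Finset (Fin m), S.card ≤ t → ∀ d : Fin m → A, ∀ i ∈ S, ∀ j ∉ S,
    pEU (u i) (deviate x S d) - pEU (u i) x ≤
      pEU (u j) (deviate x S d) - pEU (u j) x + ε

/-- The game is γ-varied: for all players `i, j, k`, all pure profiles and unilateral
deviations of `i`, the changes in `u_j` and `u_k` differ by at most `γ`. -/
def Varied [Fintype A] [DecidableEq A] (u : Fin m → (Fin m → A) → ℝ) (γ : ℝ) : Prop :=
  ∀ (i j k : Fin m) (s : Fin m → A) (a : A),
    |(u j (Function.update s i a) - u j s) - (u k (Function.update s i a) - u k s)| ≤ γ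

/-- Recombining a value at coordinate `k` with values elsewhere. -/
def recomb {m : ℕ} {A : Type*} (k : Fin m) (c : A) (r : {j : Fin m // j ≠ k} → A) :
    Fin m → A :=
  fun i => if h : i = k then c else r ⟨i, h⟩

lemma recomb_k {k : Fin m} (c : A) (r : {j : Fin m // j ≠ k} → A) :
    recomb k c r k = c := by simp [recomb]

lemma recomb_ne {k : Fin m} (c : A) (r : {j : Fin m // j ≠ k} → A)
    {i : Fin m} (h : i ≠ k) : recomb k c r i = r ⟨i, h⟩ := by simp [recomb, h]

lemma update_recomb {k : Fin m} (c b : A) (r : {j : Fin m // j ≠ k} → A) :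
    Function.update (recomb k c r) k b = recomb k b r := by
  funext i
  rcases eq_or_ne i k with rfl | h
  · simp [recomb]
  · simp [Function.update_of_ne h, recomb, h]

/-- The equivalence splitting off coordinate `k`. -/
def splitE (k : Fin m) (A : Type*) : (Fin m → A) ≃ A × ({j : Fin m // j ≠ k} → A) where
  toFun s := (s k, fun j => s j.1)
  invFun p := recomb k p.1 p.2
  left_inv s := by
    funext i
    rcases eq_or_ne i k with rfl | h
    · simp [recomb]
    · simp [recomb, h]
  right_inv p := by
    refine Prod.ext (by simp [recomb]) ?_
    funext j
    simp [recomb, j.2]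

lemma prod_split (y : Fin m → A → ℝ) (k : Fin m) (s : Fin m → A) :
    ∏ i, y i (s i) = y k (s k) * ∏ j : {j : Fin m // j ≠ k}, y j.1 (s j.1) := by
  rw [← Finset.mul_prod_erase Finset.univ _ (Finset.mem_univ k)]
  congr 1
  rw [Finset.prod_subtype (Finset.univ.erase k) (p := fun j => j ≠ k) (by simp)]

/-- `pEU` split along coordinate `k`. -/
lemma pEU_split [Fintype A] (f : (Fin m → A) → ℝ) (y : Fin m → A → ℝ) (k : Fin m) :
    pEU f y = ∑ c : A, ∑ r : {j : Fin m // j ≠ k} → A,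
      y k c * ((∏ j, y j.1 (r j)) * f (recomb k c r)) := by
  rw [pEU, ← Equiv.sum_comp (splitE k A).symm (fun s => (∏ i, y i (s i)) * f s),
    Fintype.sum_prod_type]
  refine Finset.sum_congr rfl fun c _ => Finset.sum_congr rfl fun r _ => ?_
  have hs : (splitE k A).symm (c, r) = recomb k c r := rfl
  rw [hs, prod_split y k (recomb k c r), recomb_k, mul_assoc]
  congr 2
  exact Finset.prod_congr rfl fun j _ => by rw [recomb_ne c r j.2]

/-- Single-step bound: a one-player deviation to a pure strategy changes the expected
utilities of two players by almost the same amount, in a varied game. -/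
lemma step_bound [Fintype A] [DecidableEq A]
    (f g : (Fin m → A) → ℝ) (γ : ℝ) (k : Fin m) (b : A)
    (hfg : ∀ s : Fin m → A,
      |(f (Function.update s k b) - f s) - (g (Function.update s k b) - g s)| ≤ γ)
    (y : Fin m → A → ℝ) (hy : IsMixedProfile y) :
    |(pEU f (Function.update y k (pureS b)) - pEU f y) -
      (pEU g (Function.update y k (pureS b)) - pEU g y)| ≤ γ := by
  set y' := Function.update y k (pureS b) with hy'
  have hW : ∀ r : {j : Fin m // j ≠ k} → A,
      ∏ j : {j : Fin m // j ≠ k}, y' j.1 (r j) = ∏ j, y j.1 (r j) := by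
    intro r
    exact Finset.prod_congr rfl fun j _ => by rw [hy', Function.update_of_ne j.2]
  have hpure : ∀ (h : (Fin m → A) → ℝ),
      pEU h y' = ∑ r : {j : Fin m // j ≠ k} → A, (∏ j, y j.1 (r j)) * h (recomb k b r) := by
    intro h
    rw [pEU_split h y' k]
    have : ∀ c : A, y' k c = if c = b then (1:ℝ) else 0 := by
      intro c; rw [hy']; simp [Function.update_self, pureS]
    rw [Finset.sum_congr rfl (fun c _ => by rw [Finset.sum_congr rfl
      (fun r _ => by rw [this c, hW r])])]
    rw [Finset.sum_comm]
    refine Finset.sum_congr rfl fun r _ => ?_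
    simp [ite_mul]
  -- expected difference as a convex combination of pure differences
  have hdiff : ∀ (h : (Fin m → A) → ℝ),
      pEU h y' - pEU h y = ∑ c : A, ∑ r : {j : Fin m // j ≠ k} → A,
        (y k c * ∏ j, y j.1 (r j)) *
          (h (Function.update (recomb k c r) k b) - h (recomb k c r)) := by
    intro h
    have h1 : pEU h y' = ∑ c : A, y k c *
        ∑ r : {j : Fin m // j ≠ k} → A, (∏ j, y j.1 (r j)) * h (recomb k b r) := by
      rw [← Finset.sum_mul, (hy k).2, one_mul, hpure h]
    rw [h1, pEU_split h y k, ← Finset.sum_sub_distrib]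
    refine Finset.sum_congr rfl fun c _ => ?_
    rw [Finset.mul_sum, ← Finset.sum_sub_distrib]
    refine Finset.sum_congr rfl fun r _ => ?_
    rw [update_recomb]
    ring
  rw [hdiff f, hdiff g, ← Finset.sum_sub_distrib]
  have key : ∀ c : A, |∑ r : {j : Fin m // j ≠ k} → A,
      ((y k c * ∏ j, y j.1 (r j)) *
          (f (Function.update (recomb k c r) k b) - f (recomb k c r)) -
        (y k c * ∏ j, y j.1 (r j)) *
          (g (Function.update (recomb k c r) k b) - g (recomb k c r)))| ≤
      y k c * γ := by
    intro c
    refine (Finset.abs_sum_le_sum_abs _ _).trans ?_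
    have : ∀ r : {j : Fin m // j ≠ k} → A,
        |(y k c * ∏ j, y j.1 (r j)) *
            (f (Function.update (recomb k c r) k b) - f (recomb k c r)) -
          (y k c * ∏ j, y j.1 (r j)) *
            (g (Function.update (recomb k c r) k b) - g (recomb k c r))| ≤
        (y k c * ∏ j, y j.1 (r j)) * γ := by
      intro r
      rw [← mul_sub, abs_mul]
      have hnn : 0 ≤ y k c * ∏ j, y j.1 (r j) :=
        mul_nonneg ((hy k).1 c) (Finset.prod_nonneg fun j _ => (hy j.1).1 (r j))
      rw [abs_of_nonneg hnn]
      exact mul_le_mul_of_nonneg_left (hfg (recomb k c r)) hnn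
    refine (Finset.sum_le_sum fun r _ => this r).trans (le_of_eq ?_)
    have hsum : ∑ r : {j : Fin m // j ≠ k} → A, ∏ j, y j.1 (r j) = 1 := by
      have hps := Finset.prod_univ_sum
        (fun _ : {j : Fin m // j ≠ k} => (Finset.univ : Finset A)) (fun j a => y j.1 a)
      rw [Fintype.piFinset_univ] at hps
      rw [← hps]
      exact Finset.prod_eq_one fun j _ => (hy j.1).2
    calc ∑ r : {j : Fin m // j ≠ k} → A, (y k c * ∏ j, y j.1 (r j)) * γ
        = y k c * (∑ r : {j : Fin m // j ≠ k} → A, ∏ j, y j.1 (r j)) * γ := by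
          rw [← Finset.sum_mul, ← Finset.mul_sum]
      _ = y k c * γ := by rw [hsum, mul_one]
  calc |∑ c : A, (∑ r : {j : Fin m // j ≠ k} → A,
        (y k c * ∏ j, y j.1 (r j)) *
          (f (Function.update (recomb k c r) k b) - f (recomb k c r)) -
      ∑ r : {j : Fin m // j ≠ k} → A,
        (y k c * ∏ j, y j.1 (r j)) *
          (g (Function.update (recomb k c r) k b) - g (recomb k c r)))|
      ≤ ∑ c : A, y k c * γ := by
        refine (Finset.abs_sum_le_sum_abs _ _).trans (Finset.sum_le_sum fun c _ => ?_)
        rw [← Finset.sum_sub_distrib]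
        exact key c
    _ = γ := by rw [← Finset.sum_mul, (hy k).2, one_mul]

lemma deviate_empty [Fintype A] [DecidableEq A] (x : Fin m → A → ℝ) (d : Fin m → A) :
    deviate x (∅ : Finset (Fin m)) d = x := by
  funext i; simp [deviate]

lemma deviate_insert [Fintype A] [DecidableEq A] (x : Fin m → A → ℝ)
    (S : Finset (Fin m)) (d : Fin m → A) (k : Fin m) (hk : k ∉ S) :
    deviate x (insert k S) d = Function.update (deviate x S d) k (pureS (d k)) := by
  funext i
  rcases eq_or_ne i k with rfl | h
  · simp [deviate, hk]
  · simp [deviate, Function.update_of_ne h, Finset.mem_insert, h]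

lemma deviate_isMixed [Fintype A] [DecidableEq A] (x : Fin m → A → ℝ)
    (hx : IsMixedProfile x) (S : Finset (Fin m)) (d : Fin m → A) :
    IsMixedProfile (deviate x S d) := by
  intro i
  by_cases h : i ∈ S
  · refine ⟨fun a => ?_, ?_⟩
    · simp only [deviate, h, if_true, pureS]
      split <;> norm_num
    · simp only [deviate, h, if_true, pureS]
      rw [Finset.sum_ite_eq' Finset.univ (d i) (fun _ => (1:ℝ))]
      simp
  · simpa only [deviate, h, if_false] using hx i

lemma tele_bound [Fintype A] [DecidableEq A]
    (u : Fin m → (Fin m → A) → ℝ) (γ : ℝ) (hγ : 0 ≤ γ) (hvar : Varied u γ)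
    (x : Fin m → A → ℝ) (hx : IsMixedProfile x) (i j : Fin m) (S : Finset (Fin m))
    (d : Fin m → A) :
    |(pEU (u i) (deviate x S d) - pEU (u i) x) -
      (pEU (u j) (deviate x S d) - pEU (u j) x)| ≤ γ * S.card := by
  induction S using Finset.induction_on with
  | empty => simp [deviate_empty]
  | @insert k S hk ih =>
    rw [deviate_insert x S d k hk]
    set y := deviate x S d with hy
    have hmix : IsMixedProfile y := deviate_isMixed x hx S d
    have hstep := step_bound (u i) (u j) γ k (d k)
      (fun s => hvar k i j s (d k)) y hmix
    have h3 : (pEU (u i) (Function.update y k (pureS (d k))) - pEU (u i) x) -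
        (pEU (u j) (Function.update y k (pureS (d k))) - pEU (u j) x) =
        ((pEU (u i) (Function.update y k (pureS (d k))) - pEU (u i) y) -
          (pEU (u j) (Function.update y k (pureS (d k))) - pEU (u j) y)) +
        ((pEU (u i) y - pEU (u i) x) - (pEU (u j) y - pEU (u j) x)) := by ring
    rw [h3]
    refine (abs_add_le _ _).trans ?_
    rw [Finset.card_insert_of_notMem hk]
    push_cast
    calc _ ≤ γ + γ * S.card := add_le_add hstep ih
      _ = γ * (S.card + 1) := by ring

/-- in a γ-varied `m`-player game, every Nash equilibrium is
`(γt, t)`-coalitional envy-proof. -/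
theorem varied_nash_coalEnvyProof
    [Fintype A] [DecidableEq A] [Nonempty A]
    (u : Fin m → (Fin m → A) → ℝ) (γ : ℝ) (hγ : 0 ≤ γ) (hvar : Varied u γ) (t : ℕ)
    (x : Fin m → A → ℝ) (hx : IsMixedProfile x) (hNash : IsNashM u x) :
    CoalEnvyProof u (γ * t) t x := by
  intro S hS d i hi j hj
  have h := tele_bound u γ hγ hvar x hx i j S d
  have h2 : (pEU (u i) (deviate x S d) - pEU (u i) x) -
      (pEU (u j) (deviate x S d) - pEU (u j) x) ≤ γ * S.card :=
    (le_abs_self _).trans h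
  have h3 : (γ : ℝ) * S.card ≤ γ * t :=
    mul_le_mul_of_nonneg_left (by exact_mod_cast hS) hγ
  linarith
end

section
/- Let G = ({u_i}_{i∈[m]}, A) be an m-player game that is γ-sensitive for some γ ≥ 0, and let t ∈ ℕ. Then every mixed strategy profile that is a Nash equilibrium of G is (4γt, t)-coalitional envy-proof. -/
open Finset

variable {m : ℕ} {A : Type*}

/-- The game is γ-sensitive: a unilateral deviation of player `i` changes any other
player's utility by at most `γ`. -/
def Sensitive [Fintype A] [DecidableEq A] (u : Fin m → (Fin m → A) → ℝ) (γ : ℝ) : Prop :=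
  ∀ (i j : Fin m), j ≠ i → ∀ (s : Fin m → A) (a : A),
    |u j (Function.update s i a) - u j s| ≤ γ

/-- The pure profile obtained from `s` by letting players in `S` play according to `d`. -/
def patchF (S : Finset (Fin m)) (d s : Fin m → A) : Fin m → A :=
  fun i => if i ∈ S then d i else s i

lemma patchF_insert {S : Finset (Fin m)} {k : Fin m} (hk : k ∉ S) (d s : Fin m → A) :
    patchF (insert k S) d s = Function.update (patchF S d s) k (d k) := by
  funext j
  rcases eq_or_ne j k with rfl | h
  · simp [patchF]
  · simp [patchF, Function.update_of_ne h, Finset.mem_insert, h]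

lemma patchF_erase {S : Finset (Fin m)} {i : Fin m} (hi : i ∈ S) (d s : Fin m → A) :
    patchF S d s = patchF (S.erase i) d (Function.update s i (d i)) := by
  funext j
  rcases eq_or_ne j i with rfl | h
  · simp [patchF, hi]
  · by_cases hjS : j ∈ S <;>
      simp [patchF, hjS, Finset.mem_erase, h, Function.update_of_ne h]

lemma pEU_update [Fintype A] [DecidableEq A] (f : (Fin m → A) → ℝ)
    (y : Fin m → A → ℝ) (k : Fin m) (a : A) (hy : ∑ b, y k b = 1) :
    pEU f (Function.update y k (pureS a)) = pEU (fun s => f (Function.update s k a)) y := by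
  classical
  have hP : ∀ s : Fin m → A, (∏ i, Function.update y k (pureS a) i (s i))
      = (if s k = a then 1 else 0) * ∏ i ∈ Finset.univ.erase k, y i (s i) := by
    intro s
    rw [← Finset.mul_prod_erase Finset.univ _ (mem_univ k)]
    congr 1
    · simp [pureS]
    · exact Finset.prod_congr rfl fun i hi => by
        rw [Function.update_of_ne (Finset.ne_of_mem_erase hi)]
  have hQ : ∀ s : Fin m → A, (∏ i, y i (s i))
      = y k (s k) * ∏ i ∈ Finset.univ.erase k, y i (s i) :=
    fun s => (Finset.mul_prod_erase Finset.univ _ (mem_univ k)).symm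
  unfold pEU
  simp_rw [hP, hQ]
  have hL : ∑ s : Fin m → A,
      ((if s k = a then 1 else 0) * ∏ i ∈ Finset.univ.erase k, y i (s i)) * f s
      = ∑ s ∈ Finset.univ.filter (fun s : Fin m → A => s k = a),
          (∏ i ∈ Finset.univ.erase k, y i (s i)) * f s := by
    rw [Finset.sum_filter]
    refine Finset.sum_congr rfl fun s _ => ?_
    split_ifs <;> ring
  rw [hL]
  have hfib : ∀ b : A,
      ∑ s ∈ Finset.univ.filter (fun s : Fin m → A => s k = b),
        (y k (s k) * ∏ i ∈ Finset.univ.erase k, y i (s i)) * f (Function.update s k a)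
      = y k b * ∑ s ∈ Finset.univ.filter (fun s : Fin m → A => s k = a),
          (∏ i ∈ Finset.univ.erase k, y i (s i)) * f s := by
    intro b
    rw [Finset.mul_sum]
    refine Finset.sum_nbij' (fun s => Function.update s k a)
      (fun s => Function.update s k b) ?_ ?_ ?_ ?_ ?_
    · intro s _; simp
    · intro s _; simp
    · intro s hs
      simp only [Finset.mem_filter, Finset.mem_univ, true_and] at hs
      show Function.update (Function.update s k a) k b = s
      rw [Function.update_idem, ← hs, Function.update_eq_self]
    · intro s hs
      simp only [Finset.mem_filter, Finset.mem_univ, true_and] at hs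
      show Function.update (Function.update s k b) k a = s
      rw [Function.update_idem, ← hs, Function.update_eq_self]
    · intro s hs
      simp only [Finset.mem_filter, Finset.mem_univ, true_and] at hs
      rw [hs]
      have hprod : (∏ i ∈ Finset.univ.erase k, y i (s i))
          = ∏ i ∈ Finset.univ.erase k, y i (Function.update s k a i) :=
        Finset.prod_congr rfl fun i hi => by
          rw [Function.update_of_ne (Finset.ne_of_mem_erase hi)]
      rw [hprod]; ring
  calc ∑ s ∈ Finset.univ.filter (fun s : Fin m → A => s k = a),
          (∏ i ∈ Finset.univ.erase k, y i (s i)) * f s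
      = (∑ b, y k b) * ∑ s ∈ Finset.univ.filter (fun s : Fin m → A => s k = a),
          (∏ i ∈ Finset.univ.erase k, y i (s i)) * f s := by rw [hy, one_mul]
    _ = ∑ b, y k b * ∑ s ∈ Finset.univ.filter (fun s : Fin m → A => s k = a),
          (∏ i ∈ Finset.univ.erase k, y i (s i)) * f s := by rw [Finset.sum_mul]
    _ = ∑ b, ∑ s ∈ Finset.univ.filter (fun s : Fin m → A => s k = b),
          (y k (s k) * ∏ i ∈ Finset.univ.erase k, y i (s i)) * f (Function.update s k a) := by
        exact Finset.sum_congr rfl fun b _ => (hfib b).symm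
    _ = ∑ s : Fin m → A,
          (y k (s k) * ∏ i ∈ Finset.univ.erase k, y i (s i)) * f (Function.update s k a) :=
        Finset.sum_fiberwise_of_maps_to (fun s _ => mem_univ _) _

lemma pEU_deviate [Fintype A] [DecidableEq A] (f : (Fin m → A) → ℝ)
    (x : Fin m → A → ℝ) (hx : IsMixedProfile x) (d : Fin m → A) (S : Finset (Fin m)) :
    pEU f (deviate x S d) = ∑ s : Fin m → A, (∏ i, x i (s i)) * f (patchF S d s) := by
  classical
  induction S using Finset.induction generalizing f with
  | empty =>
      have h1 : deviate x ∅ d = x := by funext i; simp [deviate]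
      have h2 : ∀ s : Fin m → A, patchF (∅ : Finset (Fin m)) d s = s := by
        intro s; funext i; simp [patchF]
      simp [h1, h2, pEU]
  | insert k S hk ih =>
      have hdev : deviate x (insert k S) d
          = Function.update (deviate x S d) k (pureS (d k)) := by
        funext i
        rcases eq_or_ne i k with rfl | h
        · simp [deviate]
        · simp [deviate, Function.update_of_ne h, Finset.mem_insert, h]
      have hsum : ∑ b, deviate x S d k b = 1 := by
        simp only [deviate, hk, if_neg hk]
        exact (hx k).2
      rw [hdev, pEU_update f _ k (d k) hsum,
        ih (fun s => f (Function.update s k (d k)))]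
      exact Finset.sum_congr rfl fun s _ => by rw [patchF_insert hk]

/-- in a γ-sensitive `m`-player game, every Nash equilibrium is
`(4γt, t)`-coalitional envy-proof. -/
theorem sensitive_nash_coalEnvyProof
    [Fintype A] [DecidableEq A] [Nonempty A]
    (u : Fin m → (Fin m → A) → ℝ) (γ : ℝ) (hγ : 0 ≤ γ) (hsen : Sensitive u γ) (t : ℕ)
    (x : Fin m → A → ℝ) (hx : IsMixedProfile x) (hNash : IsNashM u x) :
    CoalEnvyProof u (4 * γ * t) t x := by
  classical
  -- pointwise sensitivity bound for players outside the coalition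
  have hpatch : ∀ (S : Finset (Fin m)), ∀ j ∉ S, ∀ d s : Fin m → A,
      |u j (patchF S d s) - u j s| ≤ γ * S.card := by
    intro S
    induction S using Finset.induction with
    | empty =>
        intro j _ d s
        have : patchF (∅ : Finset (Fin m)) d s = s := by funext i; simp [patchF]
        simp [this]
    | insert k S hk ih =>
        intro j hj d s
        have hjk : j ≠ k := fun h => hj (h ▸ Finset.mem_insert_self k S)
        have hjS : j ∉ S := fun h => hj (Finset.mem_insert_of_mem h)
        have h1 := hsen k j hjk (patchF S d s) (d k)
        have h2 := ih j hjS d s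
        have hcard : ((insert k S).card : ℝ) = S.card + 1 := by
          rw [Finset.card_insert_of_notMem hk]; push_cast; ring
        calc |u j (patchF (insert k S) d s) - u j s|
            ≤ |u j (Function.update (patchF S d s) k (d k)) - u j (patchF S d s)|
              + |u j (patchF S d s) - u j s| := by
                rw [patchF_insert hk]; exact abs_sub_le _ _ _
          _ ≤ γ + γ * S.card := add_le_add h1 h2
          _ = γ * (insert k S).card := by rw [hcard]; ring
  intro S hS d i hi j hj
  set w : (Fin m → A) → ℝ := fun s => ∏ k, x k (s k) with hw
  have hwnn : ∀ s, 0 ≤ w s := fun s =>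
    Finset.prod_nonneg fun k _ => (hx k).1 (s k)
  have hwsum : ∑ s : Fin m → A, w s = 1 := by
    rw [hw, ← Fintype.prod_sum]
    exact Finset.prod_eq_one fun k _ => (hx k).2
  have hScard : (S.card : ℝ) ≤ t := by exact_mod_cast hS
  have hγt : 0 ≤ γ * t := mul_nonneg hγ (Nat.cast_nonneg t)
  -- generic averaging bounds
  have havg_le : ∀ (g : (Fin m → A) → ℝ) (c : ℝ), (∀ s, g s ≤ c) →
      ∑ s : Fin m → A, w s * g s ≤ c := by
    intro g c hg
    calc ∑ s : Fin m → A, w s * g s ≤ ∑ s : Fin m → A, w s * c :=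
          Finset.sum_le_sum fun s _ => mul_le_mul_of_nonneg_left (hg s) (hwnn s)
      _ = c := by rw [← Finset.sum_mul, hwsum, one_mul]
  have havg_ge : ∀ (g : (Fin m → A) → ℝ) (c : ℝ), (∀ s, c ≤ g s) →
      c ≤ ∑ s : Fin m → A, w s * g s := by
    intro g c hg
    calc c = ∑ s : Fin m → A, w s * c := by rw [← Finset.sum_mul, hwsum, one_mul]
      _ ≤ ∑ s : Fin m → A, w s * g s :=
          Finset.sum_le_sum fun s _ => mul_le_mul_of_nonneg_left (hg s) (hwnn s)
  have hdiff : ∀ p : Fin m, pEU (u p) (deviate x S d) - pEU (u p) x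
      = ∑ s : Fin m → A, w s * (u p (patchF S d s) - u p s) := by
    intro p
    rw [pEU_deviate (u p) x hx d S]
    unfold pEU
    rw [← Finset.sum_sub_distrib]
    exact Finset.sum_congr rfl fun s _ => by rw [mul_sub]
  -- bound for the envious player i (uses Nash)
  have hNashi : pEU (u i) (deviate x {i} (fun _ => d i)) ≤ pEU (u i) x := hNash i (d i)
  have hNashSum : ∑ s : Fin m → A, w s * (u i (Function.update s i (d i)) - u i s) ≤ 0 := by
    have h1 : pEU (u i) (deviate x {i} (fun _ => d i))
        = ∑ s : Fin m → A, w s * u i (Function.update s i (d i)) := by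
      rw [pEU_deviate (u i) x hx (fun _ => d i) {i}]
      refine Finset.sum_congr rfl fun s _ => ?_
      have hps : patchF {i} (fun _ => d i) s = Function.update s i (d i) := by
        funext j'
        rcases eq_or_ne j' i with rfl | h
        · simp [patchF]
        · simp [patchF, Function.update_of_ne h, h]
      rw [hps]
    have h2 : pEU (u i) x = ∑ s : Fin m → A, w s * u i s := rfl
    simp_rw [mul_sub, Finset.sum_sub_distrib]
    rw [← h1, ← h2]
    linarith
  have hipt : ∀ s : Fin m → A,
      u i (patchF S d s) - u i s ≤ u i (Function.update s i (d i)) - u i s + γ * t := by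
    intro s
    have hii : i ∉ S.erase i := Finset.notMem_erase i S
    have h1 := hpatch (S.erase i) i hii d (Function.update s i (d i))
    rw [← patchF_erase hi] at h1
    have h2 : |u i (patchF S d s) - u i (Function.update s i (d i))| ≤ γ * t := by
      refine h1.trans (mul_le_mul_of_nonneg_left ?_ hγ)
      have : (S.erase i).card ≤ t := le_trans (Finset.card_erase_le) hS
      exact_mod_cast this
    have := (abs_le.mp h2).2
    linarith
  have hibound : pEU (u i) (deviate x S d) - pEU (u i) x ≤ γ * t := by
    rw [hdiff i]
    calc ∑ s : Fin m → A, w s * (u i (patchF S d s) - u i s)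
        ≤ ∑ s : Fin m → A, w s * (u i (Function.update s i (d i)) - u i s + γ * t) :=
          Finset.sum_le_sum fun s _ => mul_le_mul_of_nonneg_left (hipt s) (hwnn s)
      _ = (∑ s : Fin m → A, w s * (u i (Function.update s i (d i)) - u i s))
          + (∑ s : Fin m → A, w s) * (γ * t) := by
            rw [Finset.sum_mul, ← Finset.sum_add_distrib]
            exact Finset.sum_congr rfl fun s _ => by ring
      _ ≤ 0 + 1 * (γ * t) := by rw [hwsum]; linarith [hNashSum]
      _ = γ * t := by ring
  -- bound for the envied player j (uses sensitivity only)
  have hjbound : -(γ * t) ≤ pEU (u j) (deviate x S d) - pEU (u j) x := by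
    rw [hdiff j]
    refine havg_ge _ _ fun s => ?_
    have h1 := hpatch S j hj d s
    have h2 : γ * S.card ≤ γ * t := mul_le_mul_of_nonneg_left hScard hγ
    have := (abs_le.mp h1).1
    linarith
  have : (4 : ℝ) * γ * t = 4 * (γ * t) := by ring
  linarith [hibound, hjbound, hγt]
end
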